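/- Suppose the underlying network G is a tree with infection source v ∈ V, let H be the minimal connected subtree of G spanning V_e ∪ {v}, and let the elapsed time be t ∈ 𝒯_v. Then for any node u ∈ H∖{v}, the first infection time t_u of u in any infection path consistent with V_e satisfies d(v,u) ≤ t_u ≤ t − d̄(u, T_u(v;H)). -/

import Mathlib

open scoped Classical

namespace SILimited

/-- The possible states of a node in the discrete-time SI model with limited observations:
susceptible, non-susceptible, infected (non-explicit), and explicit. -/
inductive NodeState : Type
  | susceptible : NodeState
  | nonsusceptible : NodeState
  | infected : NodeState
  | explicitN : NodeState
  deriving DecidableEq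

/-- A node state counts as infected if it is infected (non-explicit) or explicit. -/
def NodeState.IsInfected : NodeState → Prop
  | .infected => True
  | .explicitN => True
  | _ => False

variable {V : Type*}

/-- One-time-slot transition probability of a single node `u` with explicit probability `qu`,
infection probability `p`: a susceptible node stays susceptible w.p. `1 - p`, becomes infected
non-explicit w.p. `p * (1 - qu)`, becomes explicit w.p. `p * qu`; infected (resp. explicit)
nodes stay infected (resp. explicit), and non-susceptible nodes remain uninfected w.p. one. -/
def transProb (p qu : ℝ) : NodeState → NodeState → ℝ
  | .susceptible, .susceptible => 1 - p
  | .susceptible, .infected => p * (1 - qu)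
  | .susceptible, .explicitN => p * qu
  | .nonsusceptible, .nonsusceptible => 1
  | .nonsusceptible, .susceptible => 1
  | .infected, .infected => 1
  | .explicitN, .explicitN => 1
  | _, _ => 0

/-- Probability `P_v(X^t)` of an infection path `X` over elapsed time `t` given source `v`:
the product over nodes and time slots of the one-slot transition probabilities, together with
the factor for whether the source is explicit or not. -/
noncomputable def pathProb (p : ℝ) (q : V → ℝ) (v : V) (t : ℕ) (X : V → ℕ → NodeState) : ℝ :=
  (if X v 0 = .explicitN then q v else 1 - q v) *
    ∏ᶠ u : V, ∏ τ ∈ Finset.range t, transProb p (q u) (X u τ) (X u (τ + 1))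

/-- `X` is a valid infection path over times `0, 1, …, t` for the SI dynamics on `G`
with (single) infection source `v`. -/
structure IsInfectionPath (G : SimpleGraph V) (v : V) (t : ℕ) (X : V → ℕ → NodeState) : Prop where
  source_infected : (X v 0).IsInfected
  init_uninfected : ∀ u, u ≠ v → ¬ (X u 0).IsInfected
  susceptible_iff : ∀ u, ∀ τ ≤ t, ¬ (X u τ).IsInfected →
    (X u τ = .susceptible ↔ ∃ w, G.Adj u w ∧ (X w τ).IsInfected)
  infected_stays : ∀ u, ∀ τ, τ < t → X u τ = .infected → X u (τ + 1) = .infected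
  explicit_stays : ∀ u, ∀ τ, τ < t → X u τ = .explicitN → X u (τ + 1) = .explicitN
  infect_from_susceptible : ∀ u, ∀ τ, τ < t → (X u (τ + 1)).IsInfected →
    (X u τ).IsInfected ∨ X u τ = .susceptible

/-- An infection path `X^t` is consistent with the observed explicit set `Ve` if the nodes
explicit at time `t` are exactly those of `Ve`. -/
def ConsistentWith (Ve : Set V) (t : ℕ) (X : V → ℕ → NodeState) : Prop :=
  ∀ u, X u t = .explicitN ↔ u ∈ Ve

/-- The set `𝒳_v` of infection paths with source `v` and elapsed time `t` consistent with `Ve`. -/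
def pathsFor (G : SimpleGraph V) (Ve : Set V) (v : V) (t : ℕ) : Set (V → ℕ → NodeState) :=
  {X | IsInfectionPath G v t X ∧ ConsistentWith Ve t X}

/-- The set `𝒯_v` of feasible elapsed times for source `v`. -/
def feasibleTimes (G : SimpleGraph V) (Ve : Set V) (v : V) : Set ℕ :=
  {t | (pathsFor G Ve v t).Nonempty}

/-- `X` is a most likely infection path for `(v, t)`: it is a consistent infection path and
maximizes `P_v` over `𝒳_v` at elapsed time `t`. -/
def IsMostLikely (G : SimpleGraph V) (p : ℝ) (q : V → ℝ) (Ve : Set V) (v : V) (t : ℕ)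
    (X : V → ℕ → NodeState) : Prop :=
  X ∈ pathsFor G Ve v t ∧ ∀ Y ∈ pathsFor G Ve v t, pathProb p q v t Y ≤ pathProb p q v t X

/-- `d̄(v, A) = max_{u ∈ A} d(v, u)`. -/
noncomputable def dbar (G : SimpleGraph V) (v : V) (A : Set V) : ℕ :=
  sSup (G.dist v '' A)

/-- Vertex set of the subtree `T_u(v;G)` rooted at `u` with the first edge of the path from
`u` to `v` removed: in a tree these are the vertices `w` whose path from `v` passes through `u`. -/
def subtreeAway (G : SimpleGraph V) (u v : V) : Set V :=
  {w | G.dist v w = G.dist v u + G.dist u w}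

/-- Vertex set of the minimal connected subtree of the tree `G` spanning `S`: the vertices
lying on a path between two vertices of `S`. -/
def spanVerts (G : SimpleGraph V) (S : Set V) : Set V :=
  {w | ∃ a ∈ S, ∃ b ∈ S, G.dist a b = G.dist a w + G.dist w b}

/-- The first infection time of node `u` in the infection path `X`. -/
noncomputable def firstInfection (X : V → ℕ → NodeState) (u : V) : ℕ :=
  sInf {τ | (X u τ).IsInfected}

/-- The latest infection path for `(v, t)`: a consistent infection path in which every node
outside the minimal connected subtree `H` spanning `Ve ∪ {v}` remains uninfected for all
`τ ≤ t`, and every `u ∈ H \ {v}` first becomes infected at time `t - d̄(u, T_u(v;H))`. -/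
def IsLatestPath (G : SimpleGraph V) (Ve : Set V) (v : V) (t : ℕ)
    (X : V → ℕ → NodeState) : Prop :=
  IsInfectionPath G v t X ∧ ConsistentWith Ve t X ∧
  (∀ u, u ∉ spanVerts G (Ve ∪ {v}) → ∀ τ ≤ t, ¬ (X u τ).IsInfected) ∧
  (∀ u ∈ spanVerts G (Ve ∪ {v}), u ≠ v →
    firstInfection X u = t - dbar G u (subtreeAway G u v ∩ spanVerts G (Ve ∪ {v})))


section Aux

open SimpleGraph Walk

variable {V : Type*} {G : SimpleGraph V}

lemma infected_iff' (s : NodeState) :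
    s.IsInfected ↔ s = .infected ∨ s = .explicitN := by
  cases s <;> simp [NodeState.IsInfected]

lemma tree_path_length (hT : G.IsTree) {a b : V} (p : G.Walk a b) (hp : p.IsPath) :
    p.length = G.dist a b := by
  obtain ⟨q, hq, hql⟩ := hT.isConnected.exists_path_of_dist a b
  have h := hT.IsAcyclic.path_unique ⟨p, hp⟩ ⟨q, hq⟩
  have h' : p = q := congrArg Subtype.val h
  rw [h', hql]

lemma btw_iff (hT : G.IsTree) {a u b : V} (p : G.Walk a b) (hp : p.IsPath) :
    G.dist a b = G.dist a u + G.dist u b ↔ u ∈ p.support := by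
  constructor
  · intro h
    obtain ⟨q1, hq1, hl1⟩ := hT.isConnected.exists_path_of_dist a u
    obtain ⟨q2, hq2, hl2⟩ := hT.isConnected.exists_path_of_dist u b
    have hlen : (q1.append q2).length = G.dist a b := by
      rw [SimpleGraph.Walk.length_append, hl1, hl2, h]
    have hpath := (q1.append q2).isPath_of_length_eq_dist hlen
    have hpq : p = q1.append q2 :=
      congrArg Subtype.val (hT.IsAcyclic.path_unique ⟨p, hp⟩ ⟨_, hpath⟩)
    rw [hpq, SimpleGraph.Walk.mem_support_append_iff]
    exact Or.inl q1.end_mem_support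
  · intro h
    have h1 := SimpleGraph.dist_le (p.takeUntil u h)
    have h2 := SimpleGraph.dist_le (p.dropUntil u h)
    have h3 : (p.takeUntil u h).length + (p.dropUntil u h).length = p.length := by
      rw [← SimpleGraph.Walk.length_append, p.take_spec h]
    have h4 := tree_path_length hT p hp
    have htri := hT.isConnected.dist_triangle (u := a) (v := u) (w := b)
    omega

lemma btw_or (hT : G.IsTree) {a u b : V} (z : V)
    (h : G.dist a b = G.dist a u + G.dist u b) :
    G.dist z a = G.dist z u + G.dist u a ∨ G.dist z b = G.dist z u + G.dist u b := by
  obtain ⟨pa, hpa, _⟩ := hT.isConnected.exists_path_of_dist z a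
  obtain ⟨pb, hpb, _⟩ := hT.isConnected.exists_path_of_dist z b
  have hby := (pa.reverse.append pb).bypass_isPath
  have hmem : u ∈ (pa.reverse.append pb).bypass.support := (btw_iff hT _ hby).mp h
  have hm := SimpleGraph.Walk.support_bypass_subset _ hmem
  rw [SimpleGraph.Walk.mem_support_append_iff, SimpleGraph.Walk.support_reverse,
    List.mem_reverse] at hm
  rcases hm with hm | hm
  · exact Or.inl ((btw_iff hT pa hpa).mpr hm)
  · exact Or.inr ((btw_iff hT pb hpb).mpr hm)

lemma adj_dist (hT : G.IsTree) {w w' : V} (h : G.Adj w w') (z : V) :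
    G.dist z w' = G.dist z w + 1 ∨ G.dist z w = G.dist z w' + 1 := by
  obtain ⟨p, hp, hl⟩ := hT.isConnected.exists_path_of_dist z w
  by_cases hm : w' ∈ p.support
  · right
    have hb := (btw_iff hT p hp).mpr hm
    rw [hb, SimpleGraph.dist_eq_one_iff_adj.mpr h.symm]
  · left
    have hpath : (p.concat h).IsPath := by
      rw [← SimpleGraph.Walk.isPath_reverse_iff, SimpleGraph.Walk.reverse_concat]
      exact ((SimpleGraph.Walk.isPath_reverse_iff p).mpr hp).cons
        (by rwa [SimpleGraph.Walk.support_reverse, List.mem_reverse])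
    have hlen := tree_path_length hT _ hpath
    rw [SimpleGraph.Walk.length_concat, hl] at hlen
    omega

lemma btw_step (hT : G.IsTree) {v u w w' : V} (hadj : G.Adj w' w)
    (hbtw : G.dist v w = G.dist v u + G.dist u w) (hne : u ≠ w)
    (hd : G.dist v w = G.dist v w' + 1) :
    G.dist v w' = G.dist v u + G.dist u w' ∧ G.dist u w = G.dist u w' + 1 := by
  obtain ⟨p, hp, hl⟩ := hT.isConnected.exists_path_of_dist v w'
  have hlen : (p.concat hadj).length = G.dist v w := by
    rw [SimpleGraph.Walk.length_concat, hl]; omega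
  have hpath := (p.concat hadj).isPath_of_length_eq_dist hlen
  have hmem : u ∈ (p.concat hadj).support := (btw_iff hT _ hpath).mp hbtw
  rw [SimpleGraph.Walk.support_concat, List.mem_append,
    List.mem_singleton] at hmem
  have hmem' : u ∈ p.support := by
    rcases hmem with hm | hm
    · exact hm
    · exact absurd hm hne
  have h1 := (btw_iff hT p hp).mpr hmem'
  exact ⟨h1, by omega⟩

lemma infected_mono {v : V} {t : ℕ} {X : V → ℕ → NodeState}
    (hX : IsInfectionPath G v t X) {u : V} {σ σ' : ℕ}
    (h1 : σ ≤ σ') (h2 : σ' ≤ t) (hi : (X u σ).IsInfected) : (X u σ').IsInfected := by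
  induction σ', h1 using Nat.le_induction with
  | base => exact hi
  | succ n hn ih =>
    have hnt : n < t := h2
    have hin := ih (le_of_lt hnt)
    rcases (infected_iff' _).mp hin with he | he
    · rw [hX.infected_stays u n hnt he]; trivial
    · rw [hX.explicit_stays u n hnt he]; trivial

lemma reach (hT : G.IsTree) {v : V} {t : ℕ} {X : V → ℕ → NodeState}
    (hX : IsInfectionPath G v t X) :
    ∀ τ, τ ≤ t → ∀ w, (X w τ).IsInfected → ∀ u,
      G.dist v w = G.dist v u + G.dist u w →
      G.dist u w ≤ τ ∧ (X u (τ - G.dist u w)).IsInfected := by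
  intro τ
  induction τ with
  | zero =>
    intro _ w hw u hb
    have hwv : w = v := by
      by_contra hne
      exact hX.init_uninfected w hne hw
    subst hwv
    rw [SimpleGraph.dist_self] at hb
    have huv : G.dist u w = 0 := by omega
    have : u = w := hT.isConnected.dist_eq_zero_iff.mp huv
    subst this
    simpa [huv] using hw
  | succ τ ih =>
    intro hle w hw u hb
    by_cases huw : u = w
    · subst huw
      simpa [SimpleGraph.dist_self] using And.intro (Nat.zero_le (τ + 1)) hw
    · have hτt : τ < t := hle
      rcases hX.infect_from_susceptible w τ hτt hw with hinf | hsus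
      · obtain ⟨h1, h2⟩ := ih (le_of_lt hτt) w hinf u hb
        refine ⟨h1.trans (Nat.le_succ τ), ?_⟩
        exact infected_mono hX (by omega) (by omega) h2
      · have hni : ¬ (X w τ).IsInfected := by
          rw [hsus]; simp [NodeState.IsInfected]
        obtain ⟨w', hadj, hw'⟩ := (hX.susceptible_iff w τ (le_of_lt hτt) hni).mp hsus
        rcases adj_dist hT hadj v with hcase | hcase
        · -- w' is farther from v
          have t1 : G.dist u w' ≤ G.dist u w + 1 := by
            have htr := hT.isConnected.dist_triangle (u := u) (v := w) (w := w')
            rw [SimpleGraph.dist_eq_one_iff_adj.mpr hadj] at htr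
            omega
          have t2 : G.dist v w' ≤ G.dist v u + G.dist u w' :=
            hT.isConnected.dist_triangle
          have hb' : G.dist v w' = G.dist v u + G.dist u w' := by omega
          have hdw : G.dist u w' = G.dist u w + 1 := by omega
          obtain ⟨h1, h2⟩ := ih (le_of_lt hτt) w' hw' u hb'
          refine ⟨by omega, ?_⟩
          exact infected_mono hX (by omega) (by omega) h2
        · -- w' is closer to v
          obtain ⟨hb', hdw⟩ := btw_step hT hadj.symm hb huw hcase
          obtain ⟨h1, h2⟩ := ih (le_of_lt hτt) w' hw' u hb'
          refine ⟨by omega, ?_⟩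
          have heq : τ - G.dist u w' = τ + 1 - G.dist u w := by omega
          rwa [heq] at h2

lemma exists_explicit_beyond (hT : G.IsTree) {Ve : Set V} {v x : V}
    (hx : x ∈ spanVerts G (Ve ∪ {v})) (hxv : x ≠ v) :
    ∃ e ∈ Ve, G.dist v e = G.dist v x + G.dist x e := by
  obtain ⟨a, ha, b, hb, hab⟩ := hx
  have hxv' : G.dist v x ≠ 0 := fun h =>
    hxv (hT.isConnected.dist_eq_zero_iff.mp h).symm
  rcases btw_or hT v hab with h | h
  · rcases ha with ha | ha
    · exact ⟨a, ha, h⟩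
    · exfalso
      rw [Set.mem_singleton_iff] at ha
      subst ha
      rw [SimpleGraph.dist_self] at h
      omega
  · rcases hb with hb | hb
    · exact ⟨b, hb, h⟩
    · exfalso
      rw [Set.mem_singleton_iff] at hb
      subst hb
      rw [SimpleGraph.dist_self] at h
      omega

end Aux

end SILimited

open SILimited

/-- If `G` is a tree with source `v`, `H` the minimal connected subtree spanning
`Ve ∪ {v}`, and `t ∈ 𝒯_v` the elapsed time, then for any `u ∈ H \ {v}`, the first infection
time of `u` in any consistent infection path satisfies
`d(v,u) ≤ t_u ≤ t - d̄(u, T_u(v;H))`. -/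
theorem first_infection_time_bounds
    {V : Type*} [Infinite V] (G : SimpleGraph V) (hT : G.IsTree)
    (hloc : ∀ u : V, (G.neighborSet u).Finite)
    (hdeg : ∀ u : V, 2 ≤ (G.neighborSet u).ncard)
    (p : ℝ) (hp0 : 0 < p) (hp1 : p < 1)
    (q : V → ℝ) (hq0 : ∀ u, max 0 (2 - 1 / p) ≤ q u) (hq1 : ∀ u, q u ≤ 1)
    (Ve : Set V) (hVene : Ve.Nonempty) (hVefin : Ve.Finite)
    (v : V) (t : ℕ) (ht : t ∈ feasibleTimes G Ve v)
    (u : V) (huH : u ∈ spanVerts G (Ve ∪ {v})) (huv : u ≠ v)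
    (X : V → ℕ → NodeState) (hX : X ∈ pathsFor G Ve v t) :
    G.dist v u ≤ firstInfection X u ∧
      firstInfection X u ≤ t - dbar G u (subtreeAway G u v ∩ spanVerts G (Ve ∪ {v})) := by
  obtain ⟨hpath, hcons⟩ := hX
  -- every vertex of the spanning subtree is infected at time t
  have key : ∀ x, x ∈ spanVerts G (Ve ∪ {v}) → (X x t).IsInfected := by
    intro x hx
    by_cases hxv : x = v
    · subst hxv
      exact infected_mono hpath (Nat.zero_le t) le_rfl hpath.source_infected
    · obtain ⟨e, he, hbe⟩ := exists_explicit_beyond hT hx hxv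
      have hei : (X e t).IsInfected := by
        rw [infected_iff']
        exact Or.inr ((hcons e).mpr he)
      have h2 := (reach hT hpath t le_rfl e hei x hbe).2
      exact infected_mono hpath (Nat.sub_le _ _) le_rfl h2
  have huSt : (X u t).IsInfected := key u huH
  have hne : {τ | (X u τ).IsInfected}.Nonempty := ⟨t, huSt⟩
  have hmem : (X u (firstInfection X u)).IsInfected := Nat.sInf_mem hne
  have htu_le : firstInfection X u ≤ t := Nat.sInf_le huSt
  constructor
  · -- lower bound
    have hb : G.dist v u = G.dist v v + G.dist v u := by
      rw [SimpleGraph.dist_self, Nat.zero_add]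
    exact (reach hT hpath (firstInfection X u) htu_le u hmem v hb).1
  · -- upper bound
    have hub : ∀ x ∈ subtreeAway G u v ∩ spanVerts G (Ve ∪ {v}),
        G.dist u x ≤ t - firstInfection X u := by
      rintro x ⟨hx1, hx2⟩
      have hxi : (X x t).IsInfected := key x hx2
      obtain ⟨hd, hinf⟩ := reach hT hpath t le_rfl x hxi u hx1
      have hle := Nat.sInf_le (show t - G.dist u x ∈ {τ | (X u τ).IsInfected} from hinf)
      have : firstInfection X u ≤ t - G.dist u x := hle
      omega
    have hsup : dbar G u (subtreeAway G u v ∩ spanVerts G (Ve ∪ {v}))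
        ≤ t - firstInfection X u := by
      apply csSup_le'
      rintro y ⟨x, hx, rfl⟩
      exact hub x hx
    omega
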